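/- Let {G_n} be a sequence of finite connected graphs with |V_n| → ∞, degrees bounded between 1 and d, and λ₁(G_n) ≥ λ > 0 for all n (a sequence of expanders). Let Y be a complete CAT(0) space with λ₁(G,Y) ≥ (1/2)λ₁(G) for all finite graphs G (e.g., a complete CAT(0) cube complex). Then there is no uniform embedding of {G_n} into Y: there exist no maps f_n : V_n → Y and unbounded non-decreasing ρ₁, ρ₂ with ρ₁(d_{G_n}(x,x')) ≤ d_Y(f_n(x), f_n(x')) ≤ ρ₂(d_{G_n}(x,x')) for all n, x, x'. -/

import Mathlib

open Finset Filter

section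
variable {V : Type*} [Fintype V] [DecidableEq V]

/-- The Dirichlet energy `∑_{{u,v}∈E} (φ(u)-φ(v))²` of a real-valued map. -/
noncomputable def graphEnergy (G : SimpleGraph V) [DecidableRel G.Adj] (φ : V → ℝ) : ℝ :=
  (1 / 2) * ∑ u : V, ∑ v : V, if G.Adj u v then (φ u - φ v) ^ 2 else 0

/-- The degree-weighted mean `φ̄ = ∑_v (deg v / (2|E|)) φ(v)`. -/
noncomputable def graphMean (G : SimpleGraph V) [DecidableRel G.Adj] (φ : V → ℝ) : ℝ :=
  ∑ v : V, ((G.degree v : ℝ) / (2 * (G.edgeFinset.card : ℝ))) * φ v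

/-- The first positive eigenvalue `λ₁(G)` of the normalized combinatorial Laplacian,
defined variationally over nonconstant real-valued functions. -/
noncomputable def lamOne (G : SimpleGraph V) [DecidableRel G.Adj] : ℝ :=
  sInf {r : ℝ | ∃ φ : V → ℝ, (¬ ∀ u v, φ u = φ v) ∧
    r = graphEnergy G φ / ∑ v : V, (G.degree v : ℝ) * (φ v - graphMean G φ) ^ 2}

end

lemma ball_card_le {V : Type*} [Fintype V] [DecidableEq V]
    (G : SimpleGraph V) [DecidableRel G.Adj] (hconn : G.Connected)
    (d : ℕ) (hdeg : ∀ v, G.degree v ≤ d) (x : V) :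
    ∀ k : ℕ, (univ.filter (fun v => G.dist x v ≤ k)).card ≤ (d + 1) ^ k := by
  intro k
  induction k with
  | zero =>
    have hsub : univ.filter (fun v => G.dist x v ≤ 0) ⊆ {x} := by
      intro v hv
      simp only [mem_filter, Nat.le_zero] at hv
      have := (hconn.dist_eq_zero_iff).mp hv.2
      simp [this]
    calc (univ.filter (fun v => G.dist x v ≤ 0)).card ≤ ({x} : Finset V).card :=
          Finset.card_le_card hsub
      _ ≤ (d + 1) ^ 0 := by simp
  | succ k ih =>
    have hsub : univ.filter (fun v => G.dist x v ≤ k + 1) ⊆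
        (univ.filter (fun v => G.dist x v ≤ k)).biUnion
          (fun w => insert w (G.neighborFinset w)) := by
      intro v hv
      simp only [mem_filter, mem_univ, true_and] at hv
      by_cases h : G.dist x v ≤ k
      · exact Finset.mem_biUnion.mpr ⟨v, by simp [h], by simp⟩
      · have hpos : 0 < G.dist x v := by omega
        obtain ⟨p, hp⟩ := hconn.exists_walk_length_eq_dist x v
        have hlr : p.reverse.length = G.dist x v := by
          rw [SimpleGraph.Walk.length_reverse, hp]
        cases hpr : p.reverse with
        | nil =>
          rw [hpr] at hlr
          simp at hlr
          simp at hpos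
        | cons hadj q =>
          rename_i w
          have hq : G.dist x w ≤ k := by
            have h1 : G.dist x w ≤ q.reverse.length := SimpleGraph.dist_le q.reverse
            have h2 : q.reverse.length = q.length := SimpleGraph.Walk.length_reverse q
            have h3 : q.length + 1 = G.dist x v := by
              rw [hpr] at hlr
              simpa using hlr
            omega
          refine Finset.mem_biUnion.mpr ⟨w, by simp [hq], ?_⟩
          simp [SimpleGraph.mem_neighborFinset, hadj.symm]
    calc (univ.filter (fun v => G.dist x v ≤ k + 1)).card
        ≤ ((univ.filter (fun v => G.dist x v ≤ k)).biUnion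
            (fun w => insert w (G.neighborFinset w))).card := Finset.card_le_card hsub
      _ ≤ ∑ w ∈ univ.filter (fun v => G.dist x v ≤ k),
            (insert w (G.neighborFinset w)).card := Finset.card_biUnion_le
      _ ≤ ∑ w ∈ univ.filter (fun v => G.dist x v ≤ k), (d + 1) := by
          apply Finset.sum_le_sum
          intro w _
          calc (insert w (G.neighborFinset w)).card ≤ (G.neighborFinset w).card + 1 :=
                Finset.card_insert_le _ _
            _ ≤ d + 1 := by
                have := hdeg w
                rw [← SimpleGraph.card_neighborFinset_eq_degree] at this
                omega
      _ = (univ.filter (fun v => G.dist x v ≤ k)).card * (d + 1) := by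
          rw [Finset.sum_const, smul_eq_mul]
      _ ≤ (d + 1) ^ k * (d + 1) := Nat.mul_le_mul_right _ ih
      _ = (d + 1) ^ (k + 1) := by ring

/-- a sequence of expanders (`|V_n| → ∞`, degrees in `[1,d]`,
`λ₁(G_n) ≥ λ > 0`) admits no uniform embedding into a complete CAT(0) space `Y`
whose Wang invariants satisfy `λ₁(G,Y) ≥ λ₁(G)/2` for all finite graphs `G`
(e.g. a complete CAT(0) cube complex); here `lamY n` denotes `λ₁(G_n, Y)`, which,
being an infimum of Rayleigh quotients, bounds each quotient from below via the
barycenter `ybar` of the pushforward measure. -/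
theorem no_uniform_embedding_of_expanders_into_cat0
    (V : ℕ → Type) [∀ n, Fintype (V n)] [∀ n, DecidableEq (V n)]
    (G : ∀ n, SimpleGraph (V n)) [∀ n, DecidableRel (G n).Adj]
    (hconn : ∀ n, (G n).Connected)
    (d : ℕ) (hdeg : ∀ n v, (G n).degree v ≤ d) (hdeg1 : ∀ n v, 1 ≤ (G n).degree v)
    (hcard : Tendsto (fun n => Fintype.card (V n)) atTop atTop)
    (lam : ℝ) (hlam : 0 < lam) (hexp : ∀ n, lam ≤ lamOne (G n))
    {Y : Type*} [MetricSpace Y] [CompleteSpace Y]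
    (hcat : ∀ x y : Y, ∃ mid : Y, dist x mid = dist x y / 2 ∧ dist y mid = dist x y / 2 ∧
      ∀ z : Y, dist z mid ^ 2 ≤ (dist z x ^ 2 + dist z y ^ 2) / 2 - dist x y ^ 2 / 4)
    (lamY : ℕ → ℝ)
    (hlamY : ∀ n, lamOne (G n) / 2 ≤ lamY n)
    (hwang : ∀ n (φ : V n → Y), (¬ ∀ u v, φ u = φ v) → ∃ ybar : Y,
      lamY n * ∑ v : V n, ((G n).degree v : ℝ) * dist (φ v) ybar ^ 2 ≤
        (1 / 2) * ∑ u : V n, ∑ v : V n,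
          if (G n).Adj u v then dist (φ u) (φ v) ^ 2 else 0) :
    ¬ ∃ (f : ∀ n, V n → Y) (ρ₁ ρ₂ : ℝ → ℝ),
        MonotoneOn ρ₁ (Set.Ici 0) ∧ MonotoneOn ρ₂ (Set.Ici 0) ∧
        (∀ M : ℝ, ∃ t : ℝ, 0 ≤ t ∧ M < ρ₁ t) ∧
        (∀ M : ℝ, ∃ t : ℝ, 0 ≤ t ∧ M < ρ₂ t) ∧
        ∀ n (x x' : V n),
          ρ₁ ((G n).dist x x' : ℝ) ≤ dist (f n x) (f n x') ∧
            dist (f n x) (f n x') ≤ ρ₂ ((G n).dist x x' : ℝ) := by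
  rintro ⟨f, ρ₁, ρ₂, hm1, hm2, hu1, hu2, hb⟩
  set C : ℝ := (ρ₂ 1) ^ 2 * d / lam with hCdef
  have hC0 : 0 ≤ C := by positivity
  set T : ℝ := 2 * C + 1 with hTdef
  have hT0 : 0 < T := by positivity
  have hsT : 0 ≤ Real.sqrt T := Real.sqrt_nonneg T
  obtain ⟨t, ht0, htR⟩ := hu1 (2 * Real.sqrt T)
  set k : ℕ := ⌈t⌉₊ with hkdef
  set B : ℕ := (d + 1) ^ k with hBdef
  obtain ⟨n, hn⟩ := (hcard.eventually_ge_atTop (2 * B + 1)).exists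
  set N : ℕ := Fintype.card (V n) with hNdef
  have hBN : (B : ℝ) * 2 + 1 ≤ (N : ℝ) := by exact_mod_cast by omega
  have hN0 : (0:ℝ) < N := by
    have : 0 < N := by omega
    exact_mod_cast this
  -- Key claim: a large subset with small pairwise distances in Y
  have key : ∃ S : Finset (V n), (B : ℝ) < S.card ∧
      ∀ v ∈ S, ∀ w ∈ S, dist (f n v) (f n w) ≤ 2 * Real.sqrt T := by
    by_cases hc : ∀ u v : V n, f n u = f n v
    · refine ⟨univ, ?_, ?_⟩
      · rw [Finset.card_univ]
        linarith
      · intro v _ w _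
        rw [hc v w, dist_self]
        positivity
    · obtain ⟨ybar, hy⟩ := hwang n (f n) hc
      set W : V n → ℝ := fun v => dist (f n v) ybar ^ 2 with hWdef
      have hW0 : ∀ v, 0 ≤ W v := fun v => sq_nonneg _
      have hlamYn : lam / 2 ≤ lamY n := by
        have := hlamY n; have := hexp n; linarith
      have hX0 : 0 ≤ ∑ v : V n, ((G n).degree v : ℝ) * W v := by
        apply Finset.sum_nonneg
        intro v _
        exact mul_nonneg (by positivity) (hW0 v)
      -- energy bound
      have hE : (1 / 2 : ℝ) * ∑ u : V n, ∑ v : V n,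
          (if (G n).Adj u v then dist (f n u) (f n v) ^ 2 else 0)
          ≤ (1 / 2) * ((ρ₂ 1) ^ 2 * d * N) := by
        have h1 : ∀ u : V n, ∑ v : V n,
            (if (G n).Adj u v then dist (f n u) (f n v) ^ 2 else 0) ≤ (ρ₂ 1) ^ 2 * d := by
          intro u
          have hstep : ∑ v : V n, (if (G n).Adj u v then dist (f n u) (f n v) ^ 2 else 0)
              ≤ ∑ v : V n, (if (G n).Adj u v then (ρ₂ 1) ^ 2 else 0) := by
            apply Finset.sum_le_sum
            intro v _
            by_cases h : (G n).Adj u v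
            · simp only [h, if_true]
              have h1 : ((G n).dist u v : ℝ) = 1 := by
                rw [SimpleGraph.dist_eq_one_iff_adj.mpr h]; norm_num
              have h2 := (hb n u v).2
              rw [h1] at h2
              exact pow_le_pow_left₀ dist_nonneg h2 2
            · simp [h]
          have heq : ∑ v : V n, (if (G n).Adj u v then (ρ₂ 1) ^ 2 else 0)
              = ((G n).degree u : ℝ) * (ρ₂ 1) ^ 2 := by
            rw [← Finset.sum_filter, Finset.sum_const, nsmul_eq_mul]
            congr 1
            rw [← SimpleGraph.card_neighborFinset_eq_degree]
            norm_cast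
            congr 1
            ext v
            simp [SimpleGraph.mem_neighborFinset]
          have hdu : ((G n).degree u : ℝ) ≤ d := by exact_mod_cast hdeg n u
          calc ∑ v : V n, (if (G n).Adj u v then dist (f n u) (f n v) ^ 2 else 0)
              ≤ ((G n).degree u : ℝ) * (ρ₂ 1) ^ 2 := heq ▸ hstep
            _ ≤ (ρ₂ 1) ^ 2 * d := by nlinarith [sq_nonneg (ρ₂ 1)]
        have := Finset.sum_le_sum (fun u (_ : u ∈ (univ : Finset (V n))) => h1 u)
        rw [Finset.sum_const, Finset.card_univ, nsmul_eq_mul] at this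
        nlinarith [this]
      have hX : ∑ v : V n, ((G n).degree v : ℝ) * W v ≤ C * N := by
        have h2 : lamY n * ∑ v : V n, ((G n).degree v : ℝ) * W v
            ≤ (1 / 2) * ((ρ₂ 1) ^ 2 * d * N) := le_trans hy hE
        have h3 : (lam / 2) * (∑ v : V n, ((G n).degree v : ℝ) * W v)
            ≤ lamY n * (∑ v : V n, ((G n).degree v : ℝ) * W v) :=
          mul_le_mul_of_nonneg_right hlamYn hX0
        rw [hCdef, div_mul_eq_mul_div, le_div_iff₀ hlam]
        nlinarith
      have hsumW : ∑ v : V n, W v ≤ C * N := by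
        refine le_trans (Finset.sum_le_sum fun v _ => ?_) hX
        have : (1 : ℝ) ≤ ((G n).degree v : ℝ) := by exact_mod_cast hdeg1 n v
        exact le_mul_of_one_le_left (hW0 v) this
      set Sbad : Finset (V n) := univ.filter (fun v => ¬ (W v ≤ T)) with hSbad
      set S : Finset (V n) := univ.filter (fun v => W v ≤ T) with hSdef
      have hbad : T * (Sbad.card : ℝ) ≤ C * N := by
        have h1 : T * (Sbad.card : ℝ) = ∑ _v ∈ Sbad, T := by
          rw [Finset.sum_const, nsmul_eq_mul, mul_comm]
        rw [h1]
        calc ∑ v ∈ Sbad, T ≤ ∑ v ∈ Sbad, W v := by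
              apply Finset.sum_le_sum
              intro v hv
              rw [hSbad, mem_filter] at hv
              exact le_of_lt (not_le.mp hv.2)
          _ ≤ ∑ v : V n, W v :=
              Finset.sum_le_sum_of_subset_of_nonneg (Finset.filter_subset _ _)
                (fun v _ _ => hW0 v)
          _ ≤ C * N := hsumW
      have hcards : S.card + Sbad.card = N := by
        rw [hSdef, hSbad, Finset.card_filter_add_card_filter_not, Finset.card_univ]
      refine ⟨S, ?_, ?_⟩
      · have h1 : (Sbad.card : ℝ) ≤ C * N / T := by
          rw [le_div_iff₀ hT0]; linarith [hbad]
        have h2 : C * N / T < N / 2 := by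
          rw [div_lt_div_iff₀ hT0 two_pos, hTdef]
          nlinarith
        have h3 : (S.card : ℝ) = (N : ℝ) - Sbad.card := by
          have := hcards
          push_cast [← this]
          ring
        linarith
      · intro v hv w hw
        rw [hSdef, mem_filter] at hv hw
        have h1 : dist (f n v) ybar ≤ Real.sqrt T := Real.le_sqrt_of_sq_le hv.2
        have h2 : dist (f n w) ybar ≤ Real.sqrt T := Real.le_sqrt_of_sq_le hw.2
        calc dist (f n v) (f n w) ≤ dist (f n v) ybar + dist ybar (f n w) := dist_triangle _ _ _
          _ ≤ 2 * Real.sqrt T := by rw [dist_comm ybar]; linarith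
  obtain ⟨S, hScard, hSdist⟩ := key
  have hSne : S.Nonempty := by
    rw [← Finset.card_pos]
    have h0 : (0:ℝ) < (S.card : ℝ) := lt_of_le_of_lt (by positivity) hScard
    exact_mod_cast h0
  obtain ⟨x0, hx0⟩ := hSne
  have hsubS : S ⊆ univ.filter (fun v => (G n).dist x0 v ≤ k) := by
    intro w hw
    simp only [mem_filter, mem_univ, true_and]
    by_contra h
    push_neg at h
    have htle : t ≤ ((G n).dist x0 w : ℝ) := by
      refine le_trans (Nat.le_ceil t) ?_
      rw [← hkdef]
      exact_mod_cast le_of_lt h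
    have hmono := hm1 (Set.mem_Ici.mpr ht0)
      (Set.mem_Ici.mpr (le_trans ht0 htle)) htle
    have h1 := (hb n x0 w).1
    have h2 := hSdist x0 hx0 w hw
    linarith
  have hle : S.card ≤ B := by
    calc S.card ≤ (univ.filter (fun v => (G n).dist x0 v ≤ k)).card :=
          Finset.card_le_card hsubS
      _ ≤ (d + 1) ^ k := ball_card_le (G n) (hconn n) d (hdeg n) x0 k
  exact absurd hScard (by exact_mod_cast not_lt.mpr hle)
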